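/- Exact conditional decomposition used in the proof of Lemma D.4: Assume ζ is exchangeable with fixed distance n. Then for every index ĩ ∈ {1,…,k} and all reals a ≥ 0 and c ≥ 0: Σ_{(z,z')} ζ(z,z')·sqrt( a²·1[z_ĩ ≠ z'_ĩ] + c²·Σ_{i ≠ ĩ} 1[z_i ≠ z'_i] ) = (n/k)·sqrt( a² + c²·(n−1) ) + ((k−n)/k)·c·√n. -/
import Mathlib


open scoped BigOperators

/-- `ζ` is exchangeable: invariant under simultaneous coordinate permutations
(points of `{−1,+1}^k` are encoded as `Fin k → Bool`). -/
def Exchangeable {k : ℕ} (ζ : ((Fin k → Bool) × (Fin k → Bool)) → ℝ) : Prop :=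
  ∀ σ : Equiv.Perm (Fin k), ∀ p : (Fin k → Bool) × (Fin k → Bool),
    ζ (p.1 ∘ σ, p.2 ∘ σ) = ζ p

/-- `ζ` has fixed distance `n`: `ζ`-almost surely `z` and `z'` differ in exactly
`n` coordinates. -/
def FixedDistance {k : ℕ} (ζ : ((Fin k → Bool) × (Fin k → Bool)) → ℝ) (n : ℕ) : Prop :=
  ∀ p : (Fin k → Bool) × (Fin k → Bool), ζ p ≠ 0 →
    (Finset.univ.filter fun i => p.1 i ≠ p.2 i).card = n

/-- Exact conditional decomposition used in the proof of Lemma D.4. -/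
theorem conditional_decomposition
    (k : ℕ) (hk : 1 ≤ k)
    (ζ : ((Fin k → Bool) × (Fin k → Bool)) → ℝ)
    (hζ0 : ∀ p, 0 ≤ ζ p) (hζ1 : ∑ p, ζ p = 1)
    (hex : Exchangeable ζ)
    (n : ℕ) (hn1 : 1 ≤ n) (hnk : n ≤ k) (hfd : FixedDistance ζ n) :
    ∀ itil : Fin k, ∀ a c : ℝ, 0 ≤ a → 0 ≤ c →
      (∑ p : (Fin k → Bool) × (Fin k → Bool),
          ζ p * Real.sqrt (a ^ 2 * (if p.1 itil ≠ p.2 itil then 1 else 0) +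
            c ^ 2 * ∑ i ∈ Finset.univ.erase itil,
              (if p.1 i ≠ p.2 i then (1 : ℝ) else 0))) =
        ((n : ℝ) / k) * Real.sqrt (a ^ 2 + c ^ 2 * ((n : ℝ) - 1)) +
          (((k : ℝ) - n) / k) * (c * Real.sqrt n) := by
  intro itil a c ha hc
  set A : ℝ := Real.sqrt (a ^ 2 + c ^ 2 * ((n : ℝ) - 1)) with hA
  set B : ℝ := c * Real.sqrt n with hB
  -- indicator function
  set ind : Fin k → ((Fin k → Bool) × (Fin k → Bool)) → ℝ :=
    fun i p => if p.1 i ≠ p.2 i then (1 : ℝ) else 0 with hind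
  -- total indicator sum equals n when ζ p ≠ 0
  have hcard : ∀ p, ζ p ≠ 0 → (∑ i, ind i p) = (n : ℝ) := by
    intro p hp
    have := hfd p hp
    simp only [hind, Finset.sum_boole]
    rw [this]
  -- step 1: pointwise rewrite
  have key : ∀ p, ζ p * Real.sqrt (a ^ 2 * (if p.1 itil ≠ p.2 itil then 1 else 0) +
      c ^ 2 * ∑ i ∈ Finset.univ.erase itil, (if p.1 i ≠ p.2 i then (1 : ℝ) else 0)) =
      ζ p * (ind itil p * A + (1 - ind itil p) * B) := by
    intro p
    by_cases hz : ζ p = 0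
    · simp [hz]
    · have hsum : (∑ i ∈ Finset.univ.erase itil, (if p.1 i ≠ p.2 i then (1 : ℝ) else 0)) =
          (n : ℝ) - ind itil p := by
        have h1 : ind itil p + ∑ i ∈ Finset.univ.erase itil,
            (if p.1 i ≠ p.2 i then (1 : ℝ) else 0) = (n : ℝ) := by
          rw [← hcard p hz]
          exact (Finset.add_sum_erase Finset.univ (fun i => ind i p) (Finset.mem_univ itil))
        linarith
      by_cases hi : p.1 itil ≠ p.2 itil
      · have hii : ind itil p = 1 := by simp [hind, hi]
        rw [hsum, hii, if_pos hi]
        have harg : a ^ 2 * 1 + c ^ 2 * ((n : ℝ) - 1) = a ^ 2 + c ^ 2 * ((n : ℝ) - 1) := by ring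
        rw [harg, ← hA]
        ring
      · have hii : ind itil p = 0 := by simp [hind, hi]
        rw [hsum, hii, if_neg hi]
        have harg : a ^ 2 * 0 + c ^ 2 * ((n : ℝ) - 0) = c ^ 2 * (n : ℝ) := by ring
        rw [harg, Real.sqrt_mul (sq_nonneg c), Real.sqrt_sq hc, ← hB]
        ring
  rw [Finset.sum_congr rfl (fun p _ => key p)]
  set S : ℝ := ∑ p, ζ p * ind itil p with hS
  have hsplit : (∑ p, ζ p * (ind itil p * A + (1 - ind itil p) * B)) =
      S * A + (1 - S) * B := by
    have hrw : ∀ p : (Fin k → Bool) × (Fin k → Bool),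
        ζ p * (ind itil p * A + (1 - ind itil p) * B) =
        (ζ p * ind itil p) * A + ζ p * B - (ζ p * ind itil p) * B := by intro p; ring
    rw [Finset.sum_congr rfl (fun p _ => hrw p), Finset.sum_sub_distrib,
      Finset.sum_add_distrib, ← Finset.sum_mul, ← Finset.sum_mul, ← Finset.sum_mul,
      hζ1, ← hS]
    ring
  rw [hsplit]
  have hgi : ∀ i : Fin k, (∑ p, ζ p * ind i p) = S := by
    intro i
    set σ : Equiv.Perm (Fin k) := Equiv.swap i itil with hσ
    rw [hS]
    refine Fintype.sum_equiv
      ⟨fun p => (p.1 ∘ σ, p.2 ∘ σ), fun p => (p.1 ∘ σ.symm, p.2 ∘ σ.symm),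
        fun p => by ext x <;> simp, fun p => by ext x <;> simp⟩ _ _ ?_
    intro p
    show ζ p * ind i p = ζ (p.1 ∘ σ, p.2 ∘ σ) * ind itil (p.1 ∘ σ, p.2 ∘ σ)
    rw [hex σ p]
    congr 1
    simp [hind, hσ, Function.comp, Equiv.swap_apply_right]
  have hkS : (k : ℝ) * S = n := by
    have h1 : ∑ i : Fin k, (∑ p, ζ p * ind i p) = (k : ℝ) * S := by
      rw [Finset.sum_congr rfl (fun i _ => hgi i)]
      simp [mul_comm]
    have h2 : ∑ i : Fin k, (∑ p, ζ p * ind i p) = (n : ℝ) := by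
      rw [Finset.sum_comm]
      have hww : ∀ p, (∑ i : Fin k, ζ p * ind i p) = ζ p * n := by
        intro p
        by_cases hz : ζ p = 0
        · simp [hz]
        · rw [← Finset.mul_sum, hcard p hz]
      rw [Finset.sum_congr rfl (fun p _ => hww p), ← Finset.sum_mul, hζ1, one_mul]
    rw [← h1, h2]
  have hk0 : (k : ℝ) ≠ 0 := by positivity
  have hSval : S = (n : ℝ) / k := by field_simp at hkS ⊢; linarith
  rw [hSval]
  have hrem : 1 - (n : ℝ) / k = ((k : ℝ) - n) / k := by field_simp
  rw [hrem]
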